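/- arXiv:2107.01108 — 3 statements merged into one kernel-verified Lean document; each statement's English description precedes it below -/
import Mathlib

section
/- For every positive integer d there is a constant C = C(d) (one may take C = d) such that for every seminorm ‖·‖ on ℝ^d there exists a linear map A : ℝ^d → ℝ^d satisfying ‖v‖ ≤ |Av| ≤ C‖v‖ for all v ∈ ℝ^d, where |·| denotes the Euclidean norm. -/
open scoped ENNReal NNReal
open Set

noncomputable section

/-- Euclidean space `ℝ^d`. -/
abbrev Eucl (d : ℕ) := EuclideanSpace ℝ (Fin d)

/-- `ℓ^∞`, the Banach space of bounded real sequences with the sup norm. -/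
abbrev ellInfty := lp (fun _ : ℕ => ℝ) ⊤

/-- The unit cube `Q₀ = [0,1]^d ⊆ ℝ^d`. -/
def unitCube (d : ℕ) : Set (Eucl d) := {x | ∀ i, x i ∈ Set.Icc (0:ℝ) 1}

/-- The `k`-dimensional Hausdorff content: `inf Σ diam(U_i)^k` over countable
open covers of `A`. -/
def hContent (k : ℕ) {X : Type*} [PseudoEMetricSpace X] (A : Set X) : ℝ≥0∞ :=
  ⨅ (U : ℕ → Set X) (_ : A ⊆ ⋃ i, U i) (_ : ∀ i, IsOpen (U i)),
    ∑' i, EMetric.diam (U i) ^ k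

/-- The `k`-dimensional Hausdorff measure of a set, as a supremum over scales `δ`
of the infimum over countable covers by sets of diameter at most `δ`. -/
def hMeasure (k : ℕ) {X : Type*} [PseudoEMetricSpace X] (A : Set X) : ℝ≥0∞ :=
  ⨆ (δ : ℝ≥0∞) (_ : 0 < δ),
    ⨅ (U : ℕ → Set X) (_ : A ⊆ ⋃ i, U i) (_ : ∀ i, EMetric.diam (U i) ≤ δ),
      ∑' i, EMetric.diam (U i) ^ k

/-- A dyadic subcube of the unit cube `[0,1]^d`: side length `2⁻ʲ`, lower corner `z/2ʲ`. -/
structure DyadicCube (d : ℕ) where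
  j : ℕ
  z : Fin d → ℕ
  hz : ∀ i, z i < 2 ^ j

namespace DyadicCube

/-- The side length of a dyadic cube. -/
def side {d : ℕ} (Q : DyadicCube d) : ℝ := (2 : ℝ)⁻¹ ^ Q.j

/-- The closed cube in `ℝ^d` corresponding to the combinatorial data. -/
def toSet {d : ℕ} (Q : DyadicCube d) : Set (Eucl d) :=
  {x | ∀ i, (Q.z i : ℝ) * Q.side ≤ x i ∧ x i ≤ ((Q.z i : ℝ) + 1) * Q.side}

end DyadicCube

/-- The `(n,m)`-mapping content `ℋ^{n,m}_∞(f,E)`: the infimum of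
`Σ ℋ^n_∞(f(Q_i))·side(Q_i)^m` over coverings of `E` by dyadic subcubes of
`[0,1]^{n+m}` with pairwise disjoint interiors. -/
def mappingContent (n m : ℕ) {Y : Type*} [PseudoEMetricSpace Y]
    (f : Eucl (n+m) → Y) (E : Set (Eucl (n+m))) : ℝ≥0∞ :=
  ⨅ (S : Set (DyadicCube (n+m)))
    (_ : E ⊆ ⋃ Q ∈ S, Q.toSet)
    (_ : S.Pairwise fun Q Q' => Disjoint (interior Q.toSet) (interior Q'.toSet)),
    ∑' Q : S, hContent n (f '' (Q : DyadicCube (n+m)).toSet) *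
      ENNReal.ofReal ((Q : DyadicCube (n+m)).side ^ m)

/-- The variant mapping content `Ĥ^{n,m}_∞(f,A)`: the infimum of
`Σ ℋ^n_∞(f(S_i))·diam(S_i)^m` over countable covers of `A` by arbitrary
subsets of `[0,1]^{n+m}`. -/
def hatContent (n m : ℕ) {Y : Type*} [PseudoEMetricSpace Y]
    (f : Eucl (n+m) → Y) (A : Set (Eucl (n+m))) : ℝ≥0∞ :=
  ⨅ (S : ℕ → Set (Eucl (n+m)))
    (_ : ∀ i, S i ⊆ unitCube (n+m))
    (_ : A ⊆ ⋃ i, S i),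
    ∑' i, hContent n (f '' S i) * EMetric.diam (S i) ^ m

/-- A metric tree: a geodesic metric space satisfying the four-point condition
`d(x,y)+d(z,w) ≤ max(d(x,z)+d(y,w), d(x,w)+d(y,z))` (equivalently, every geodesic
triangle is a tripod). -/
def IsMetricTree (T : Type*) [MetricSpace T] : Prop :=
  (∀ x y : T, ∃ γ : ℝ → T, γ 0 = x ∧ γ (dist x y) = y ∧
    ∀ s ∈ Set.Icc (0:ℝ) (dist x y), ∀ t ∈ Set.Icc (0:ℝ) (dist x y),
      dist (γ s) (γ t) = |s - t|) ∧
  (∀ x y z w : T, dist x y + dist z w ≤ max (dist x z + dist y w) (dist x w + dist y z))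

/-- The data of a factorization `f = h ∘ g` through a metric tree by `L`-Lipschitz
maps, on the set `A`. -/
structure TreeFactorization (L : ℝ≥0) {X Y : Type*} [MetricSpace X] [MetricSpace Y]
    (f : X → Y) (A : Set X) where
  T : Type
  [instT : MetricSpace T]
  tree : IsMetricTree T
  g : X → T
  h : T → Y
  lipg : LipschitzOnWith L g A
  liph : LipschitzWith L h
  factors : ∀ x ∈ A, f x = h (g x)

/-- `f` factors through a tree by `L`-Lipschitz maps on `A`. -/
def FactorsThroughTreeOnWith (L : ℝ≥0) {X Y : Type*} [MetricSpace X] [MetricSpace Y]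
    (f : X → Y) (A : Set X) : Prop :=
  Nonempty (TreeFactorization L f A)

/-- `f` factors through a tree (by Lipschitz maps) on `A`. -/
def FactorsThroughTreeOn {X Y : Type*} [MetricSpace X] [MetricSpace Y]
    (f : X → Y) (A : Set X) : Prop :=
  ∃ L : ℝ≥0, FactorsThroughTreeOnWith L f A

/-- `dist(f,g) < ε` in the ad hoc Gromov–Hausdorff sense: there are isometric
embeddings of the targets into `ℓ^∞` with `sup_{x ∈ [0,1]^d} ‖ι_Y(f x) − ι_Z(g x)‖ < ε`. -/
def approxDist {d : ℕ} {Y Z : Type*} [MetricSpace Y] [MetricSpace Z]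
    (f : Eucl d → Y) (g : Eucl d → Z) (ε : ℝ) : Prop :=
  ∃ (ιY : Y → ellInfty) (ιZ : Z → ellInfty), Isometry ιY ∧ Isometry ιZ ∧
    ∀ x ∈ unitCube d, ‖ιY (f x) - ιZ (g x)‖ < ε

/-- The closed axis-parallel cube with center `c` and side length `s`. -/
def cubeC {d : ℕ} (c : Eucl d) (s : ℝ) : Set (Eucl d) := {x | ∀ i, |x i - c i| ≤ s / 2}

/-- The face `F_k = {t ∈ [0,1]^d : t_k = 0}` of the unit cube. -/
def face0 (d : ℕ) (k : Fin d) : Set (Eucl d) := {x | x ∈ unitCube d ∧ x k = 0}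

/-- The face `F'_k = {t ∈ [0,1]^d : t_k = 1}` of the unit cube. -/
def face1 (d : ℕ) (k : Fin d) : Set (Eucl d) := {x | x ∈ unitCube d ∧ x k = 1}

/-- The distance between two subsets of a metric space:
`dist(A,B) = inf {d(a,b) : a ∈ A, b ∈ B}` (with value `∞` for empty sets). -/
def setEDist {Y : Type*} [PseudoEMetricSpace Y] (A B : Set Y) : ℝ≥0∞ :=
  ⨅ (a ∈ A) (b ∈ B), edist a b

/-- The combinatorial distance `dist_w(E,F)`: the infimum of `Σ_t w(i_t)` over all
chains `U_{i_0}, …, U_{i_T}` from the cover `U` in which consecutive sets intersect,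
`E` meets the first set and `F` meets the last set (`∞` if no chain exists). -/
def chainDist {X : Type*} {I : Type*} (U : I → Set X) (w : I → ℝ≥0∞)
    (E F : Set X) : ℝ≥0∞ :=
  ⨅ (T : ℕ) (c : Fin (T+1) → I)
    (_ : (E ∩ U (c 0)).Nonempty)
    (_ : (F ∩ U (c (Fin.last T))).Nonempty)
    (_ : ∀ t : Fin T, (U (c t.castSucc) ∩ U (c t.succ)).Nonempty),
    ∑ t, w (c t)

/-- Projection of `ℝ^{n+m}` onto the first `n` coordinates. -/
def projX (n m : ℕ) (v : Eucl (n+m)) : Eucl n := WithLp.toLp 2 (fun i => v (Fin.castAdd m i))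

/-- Projection of `ℝ^{n+m}` onto the last `m` coordinates. -/
def projY (n m : ℕ) (v : Eucl (n+m)) : Eucl m := WithLp.toLp 2 (fun i => v (Fin.natAdd n i))

/-- `(E,g)` is a Hard Sard pair for `f` with constant `C`: `g` is (the extension of)
a global `C`-bi-Lipschitz homeomorphism of `ℝ^{n+m}` such that, with `F = f ∘ g⁻¹`
on `g(E)`: points of `g(E)` have equal `F`-values iff they have equal `x`-coordinates,
and `(x,y) ↦ (F(x,y),y)` is `C`-bi-Lipschitz on `g(E)` (the target `Y × ℝ^m` carrying
the max metric). Both conditions are expressed via points `p, q ∈ E`. -/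
def IsHardSardPair (n m : ℕ) {Y : Type*} [MetricSpace Y] (f : Eucl (n+m) → Y)
    (E : Set (Eucl (n+m))) (g : Eucl (n+m) → Eucl (n+m)) (C : ℝ≥0) : Prop :=
  Function.Bijective g ∧ LipschitzWith C g ∧
  (∀ x y : Eucl (n+m), dist x y ≤ C * dist (g x) (g y)) ∧
  (∀ p ∈ E, ∀ q ∈ E, (f p = f q ↔ projX n m (g p) = projX n m (g q))) ∧
  (∀ p ∈ E, ∀ q ∈ E,
    max (dist (f p) (f q)) (dist (projY n m (g p)) (projY n m (g q))) ≤ C * dist (g p) (g q) ∧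
    dist (g p) (g q) ≤ C * max (dist (f p) (f q)) (dist (projY n m (g p)) (projY n m (g q))))

/-- The quantity `sup_{x,y ∈ Q} |d(f(x),f(y)) − ‖x−y‖_p|` whose infimum over
seminorms `p` is `side(Q)·md_f(Q)`. -/
def mdGauge {d : ℕ} {X : Type*} [MetricSpace X] (f : Eucl d → X) (Q : Set (Eucl d))
    (p : Seminorm ℝ (Eucl d)) : ℝ≥0∞ :=
  ⨆ (x ∈ Q) (y ∈ Q), ENNReal.ofReal |dist (f x) (f y) - p (x - y)|

set_option maxHeartbeats 1000000

namespace SJ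
open scoped RealInnerProductSpace
open Matrix
variable {d k : ℕ}

def pker (p : Seminorm ℝ (Eucl d)) : Submodule ℝ (Eucl d) where
  carrier := {v | p v = 0}
  add_mem' := by
    intro a b ha hb
    simp only [Set.mem_setOf_eq] at *
    refine le_antisymm ?_ (apply_nonneg p _)
    calc p (a + b) ≤ p a + p b := map_add_le_add p a b
    _ = 0 := by rw [ha, hb, add_zero]
  zero_mem' := map_zero p
  smul_mem' := by
    intro c v hv
    simp only [Set.mem_setOf_eq] at *
    rw [map_smul_eq_mul, hv, mul_zero]

lemma abs_coord_le (v : Eucl d) (i : Fin d) : |v i| ≤ ‖v‖ := by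
  rw [EuclideanSpace.norm_eq, ← Real.sqrt_sq_eq_abs]
  apply Real.sqrt_le_sqrt
  simpa using Finset.single_le_sum (f := fun j => ‖v j‖ ^ 2)
    (fun j _ => sq_nonneg _) (Finset.mem_univ i)

lemma seminorm_bound (p : Seminorm ℝ (Eucl d)) :
    ∃ M : ℝ, 0 ≤ M ∧ ∀ v, p v ≤ M * ‖v‖ := by
  refine ⟨∑ i, p (EuclideanSpace.single i 1),
    Finset.sum_nonneg fun i _ => apply_nonneg _ _, fun v => ?_⟩
  have hv : v = ∑ i, v i • EuclideanSpace.single i (1:ℝ) := by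
    have := (EuclideanSpace.basisFun (Fin d) ℝ).sum_repr v
    simp only [EuclideanSpace.basisFun_repr, EuclideanSpace.basisFun_apply] at this
    exact this.symm
  calc p v = p (∑ i, v i • EuclideanSpace.single i (1:ℝ)) := by rw [← hv]
  _ ≤ ∑ i, p (v i • EuclideanSpace.single i (1:ℝ)) := Finset.le_sum_of_subadditive p (map_zero p).le (map_add_le_add p) _ _
  _ ≤ ∑ i, p (EuclideanSpace.single i (1:ℝ)) * ‖v‖ := by
      refine Finset.sum_le_sum fun i _ => ?_
      rw [map_smul_eq_mul, mul_comm, Real.norm_eq_abs]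
      exact mul_le_mul_of_nonneg_left (abs_coord_le v i) (apply_nonneg p _)
  _ = (∑ i, p (EuclideanSpace.single i 1)) * ‖v‖ := by rw [Finset.sum_mul]

lemma seminorm_cont (p : Seminorm ℝ (Eucl d)) : Continuous fun v : Eucl d => p v := by
  obtain ⟨M, hM0, hM⟩ := seminorm_bound p
  refine (LipschitzWith.of_dist_le_mul (K := M.toNNReal) (f := fun v : Eucl d => p v)
    fun x y => ?_).continuous
  rw [Real.dist_eq, dist_eq_norm]
  calc |p x - p y| ≤ p (x - y) := abs_sub_map_le_sub p x y
  _ ≤ M * ‖x - y‖ := hM _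
  _ = M.toNNReal * ‖x - y‖ := by rw [Real.coe_toNNReal _ hM0]


def gram (v : Fin k → Eucl d) : Matrix (Fin k) (Fin k) ℝ :=
  Matrix.of fun i j => ⟪v i, v j⟫

lemma gram_comp (v : Fin k → Eucl d) (M : Matrix (Fin k) (Fin k) ℝ) :
    gram (fun i => ∑ j, M j i • v j) = Mᵀ * gram v * M := by
  ext i i'
  simp only [gram, Matrix.of_apply, sum_inner, inner_sum, real_inner_smul_left,
    real_inner_smul_right, Matrix.mul_apply, Matrix.transpose_apply, Finset.mul_sum,
    Finset.sum_mul]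
  refine Finset.sum_congr rfl fun j _ => Finset.sum_congr rfl fun j' _ => by ring

lemma gram_det_update (v : Fin k → Eucl d) (a : Fin k → ℝ) (i : Fin k) :
    (gram (Function.update v i (∑ j, a j • v j))).det = a i ^ 2 * (gram v).det := by
  classical
  set M : Matrix (Fin k) (Fin k) ℝ := (1 : Matrix (Fin k) (Fin k) ℝ).updateCol i a with hM
  have hupdate : (fun i' => ∑ j, M j i' • v j) = Function.update v i (∑ j, a j • v j) := by
    funext i'
    by_cases h : i' = i
    · subst h
      simp [hM, Matrix.updateCol_apply, Function.update_self]
    · rw [Function.update_of_ne h]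
      have : ∀ j, M j i' = if j = i' then 1 else 0 := by
        intro j
        simp [hM, Matrix.updateCol_apply, h, Matrix.one_apply]
      simp only [this, ite_smul, one_smul, zero_smul]
      simp
  have hdetM : M.det = a i := by
    rw [hM]
    have := Matrix.cramer_one (n := Fin k) (α := ℝ)
    have h2 : Matrix.cramer (1 : Matrix (Fin k) (Fin k) ℝ) a i = a i := by rw [this]; rfl
    rw [← h2, Matrix.cramer_apply]
  rw [← hupdate, gram_comp, Matrix.det_mul, Matrix.det_mul, Matrix.det_transpose, hdetM]
  ring

lemma dot_gram (v : Fin k → Eucl d) (c : Fin k → ℝ) :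
    c ⬝ᵥ (gram v *ᵥ c) = ⟪∑ i, c i • v i, ∑ i, c i • v i⟫ := by
  simp only [dotProduct, Matrix.mulVec, gram, Matrix.of_apply, sum_inner, inner_sum,
    real_inner_smul_left, real_inner_smul_right, dotProduct]
  congr 1
  ext i
  rw [Finset.mul_sum]
  congr 1
  ext j
  rw [real_inner_comm (v j) (v i)]
  ring

lemma gram_mulVec (v : Fin k → Eucl d) (c : Fin k → ℝ) (i : Fin k) :
    (gram v *ᵥ c) i = ⟪v i, ∑ j, c j • v j⟫ := by
  simp only [Matrix.mulVec, dotProduct, gram, Matrix.of_apply, inner_sum,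
    real_inner_smul_right]
  exact Finset.sum_congr rfl fun x _ => (mul_comm _ _)

lemma gram_posDef (v : Fin k → Eucl d) (hv : LinearIndependent ℝ v) :
    (gram v).PosDef := by
  rw [Matrix.posDef_iff_dotProduct_mulVec]
  constructor
  · ext i j
    simp only [Matrix.conjTranspose_apply, gram, Matrix.of_apply, star_trivial]
    exact real_inner_comm _ _
  · intro c hc
    have hsc : (star c : Fin k → ℝ) = c := funext fun i => star_trivial _
    rw [hsc, dot_gram, real_inner_self_eq_norm_sq]
    have hne : ∑ i, c i • v i ≠ 0 := by
      intro h0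
      apply hc
      funext i
      exact Fintype.linearIndependent_iff.1 hv c h0 i
    exact pow_pos (norm_pos_iff.mpr hne) 2

lemma indep_of_gram_det_ne (v : Fin k → Eucl d) (h : (gram v).det ≠ 0) :
    LinearIndependent ℝ v := by
  rw [Fintype.linearIndependent_iff]
  intro c hc
  by_contra hne
  push_neg at hne
  obtain ⟨i, hi⟩ := hne
  have hcne : c ≠ 0 := fun h0 => hi (congrFun h0 i)
  have hmul : gram v *ᵥ c = 0 := by
    funext i'
    rw [gram_mulVec, hc, inner_zero_right]
    rfl
  exact h (Matrix.exists_mulVec_eq_zero_iff.1 ⟨c, hcne, hmul⟩)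


def embed (d k : ℕ) : (Fin k → ℝ) →ₗ[ℝ] Eucl d where
  toFun c := WithLp.toLp 2 (fun j => if h : (j : ℕ) < k then c ⟨j, h⟩ else 0)
  map_add' c c' := by
    ext j
    by_cases h : (j : ℕ) < k <;> simp [h]
  map_smul' r c := by
    ext j
    by_cases h : (j : ℕ) < k <;> simp [h]

lemma norm_embed {d k : ℕ} (hkd : k ≤ d) (c : Fin k → ℝ) :
    ‖embed d k c‖ = Real.sqrt (∑ i, c i ^ 2) := by
  rw [EuclideanSpace.norm_eq]
  congr 1
  set g : ℕ → ℝ := fun j => if h : j < k then c ⟨j, h⟩ ^ 2 else 0 with hg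
  calc ∑ j : Fin d, ‖embed d k c j‖ ^ 2 = ∑ j : Fin d, g j.val := by
        refine Finset.sum_congr rfl fun j _ => ?_
        by_cases h : (j : ℕ) < k
        · simp [embed, g, h, Real.norm_eq_abs, sq_abs]
        · simp [embed, g, h]
  _ = ∑ j ∈ Finset.range d, g j := Fin.sum_univ_eq_sum_range g d
  _ = ∑ j ∈ Finset.range k, g j := by
        refine (Finset.sum_subset (Finset.range_subset_range.2 hkd) ?_).symm
        intro x _ hx
        rw [Finset.mem_range] at hx
        simp [g, hx]
  _ = ∑ i : Fin k, g i.val := (Fin.sum_univ_eq_sum_range g k).symm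
  _ = ∑ i : Fin k, c i ^ 2 := by
        refine Finset.sum_congr rfl fun i _ => ?_
        simp [g, i.isLt]


lemma mem_pker {p : Seminorm ℝ (Eucl d)} {v : Eucl d} : v ∈ pker p ↔ p v = 0 := Iff.rfl

theorem main (d : ℕ) (hd : 0 < d) :
    ∃ C : ℝ, 0 < C ∧ C = d ∧
      ∀ p : Seminorm ℝ (Eucl d),
        ∃ A : Eucl d →ₗ[ℝ] Eucl d, ∀ v : Eucl d, p v ≤ ‖A v‖ ∧ ‖A v‖ ≤ C * p v := by
  classical
  refine ⟨d, by exact_mod_cast hd, rfl, fun p => ?_⟩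
  set K : Submodule ℝ (Eucl d) := pker p with hK
  -- trivial case
  by_cases hbot : Kᗮ = ⊥
  · refine ⟨0, fun v => ?_⟩
    have hKtop : K = ⊤ := by
      have h1 : Kᗮᗮ = K := Submodule.orthogonal_orthogonal K
      rw [hbot] at h1
      rw [← h1, Submodule.bot_orthogonal_eq_top]
    have hvK : v ∈ K := by rw [hKtop]; exact Submodule.mem_top
    have hp0 : p v = 0 := mem_pker.1 hvK
    simp [hp0]
  -- main case
  set k : ℕ := Module.finrank ℝ ↥Kᗮ with hkdef
  have hk0 : 0 < k := by
    rw [hkdef]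
    rw [Module.finrank_pos_iff]
    exact Submodule.nontrivial_iff_ne_bot.2 hbot
  have hkd : k ≤ d := by
    have := Submodule.finrank_le Kᗮ
    rwa [finrank_euclideanSpace_fin] at this
  have hcont : Continuous fun v : Eucl d => p v := seminorm_cont p
  -- the compact set S
  set S : Set (Eucl d) := {w | w ∈ Kᗮ ∧ p w ≤ 1} with hSdef
  have hS0 : (0 : Eucl d) ∈ S := ⟨Submodule.zero_mem _, by simp⟩
  -- positivity of p on Kᗮ
  have hpne : ∀ w : Eucl d, w ∈ Kᗮ → p w = 0 → w = 0 := by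
    intro w hw hpw
    have hwK : w ∈ K := mem_pker.2 hpw
    have h0 : ⟪w, w⟫ = (0:ℝ) := (Submodule.mem_orthogonal K w).1 hw w hwK
    exact inner_self_eq_zero.1 h0
  have hc : ∃ c : ℝ, 0 < c ∧ ∀ w ∈ Kᗮ, c * ‖w‖ ≤ p w := by
    obtain ⟨x, hxK, hx0⟩ := (Submodule.ne_bot_iff Kᗮ).1 hbot
    set sph : Set (Eucl d) := (Kᗮ : Set (Eucl d)) ∩ Metric.sphere 0 1 with hsph
    have hsphc : IsCompact sph :=
      (isCompact_sphere (0 : Eucl d) 1).inter_left Kᗮ.closed_of_finiteDimensional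
    have hnex : ‖x‖ ≠ 0 := norm_ne_zero_iff.2 hx0
    have hne : sph.Nonempty := by
      refine ⟨‖x‖⁻¹ • x, ⟨Submodule.smul_mem _ _ hxK, ?_⟩⟩
      rw [mem_sphere_zero_iff_norm, norm_smul, norm_inv, norm_norm,
        inv_mul_cancel₀ hnex]
    obtain ⟨w0, hw0mem, hw0min⟩ := hsphc.exists_isMinOn hne hcont.continuousOn
    have hw0K : w0 ∈ Kᗮ := hw0mem.1
    have hw0n : ‖w0‖ = 1 := mem_sphere_zero_iff_norm.1 hw0mem.2
    have hw0pos : 0 < p w0 := by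
      rcases (apply_nonneg p w0).lt_or_eq with h | h
      · exact h
      · exfalso
        rw [hpne w0 hw0K h.symm, norm_zero] at hw0n
        exact one_ne_zero hw0n.symm
    refine ⟨p w0, hw0pos, fun w hw => ?_⟩
    by_cases hw0' : w = 0
    · simp [hw0']
    · have hnw : ‖w‖ ≠ 0 := norm_ne_zero_iff.2 hw0'
      have hmem : ‖w‖⁻¹ • w ∈ sph := by
        refine ⟨Submodule.smul_mem _ _ hw, ?_⟩
        rw [mem_sphere_zero_iff_norm, norm_smul, norm_inv, norm_norm,
          inv_mul_cancel₀ hnw]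
      have h1 : p w0 ≤ p (‖w‖⁻¹ • w) := hw0min hmem
      rw [map_smul_eq_mul, norm_inv, norm_norm] at h1
      calc p w0 * ‖w‖ ≤ (‖w‖⁻¹ * p w) * ‖w‖ :=
            mul_le_mul_of_nonneg_right h1 (norm_nonneg _)
      _ = p w := by
            rw [mul_comm (‖w‖⁻¹) (p w), mul_assoc, inv_mul_cancel₀ hnw, mul_one]
  have hScompact : IsCompact S := by
    obtain ⟨c, hcpos, hcle⟩ := hc
    have hclosed : IsClosed S := by
      have h1 : IsClosed (Kᗮ : Set (Eucl d)) := Kᗮ.closed_of_finiteDimensional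
      have h2 : IsClosed {w : Eucl d | p w ≤ 1} := isClosed_le hcont continuous_const
      exact h1.inter h2
    have hbounded : Bornology.IsBounded S := by
      rw [isBounded_iff_forall_norm_le]
      refine ⟨c⁻¹, fun w hw => ?_⟩
      have h1 : c * ‖w‖ ≤ 1 := le_trans (hcle w hw.1) hw.2
      rw [inv_eq_one_div, le_div_iff₀ hcpos]
      linarith [h1, mul_comm c ‖w‖]
    exact Metric.isCompact_of_isClosed_isBounded hclosed hbounded
  -- maximize the Gram determinant
  have hGcont : Continuous fun v : Fin k → Eucl d => (gram v).det := by
    have h1 : Continuous fun v : Fin k → Eucl d => gram v := by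
      apply continuous_matrix
      intro i j
      exact Continuous.inner (𝕜 := ℝ) (E := Eucl d) (continuous_apply i) (continuous_apply j)
    exact h1.matrix_det
  have hSk : IsCompact (Set.pi Set.univ fun _ : Fin k => S) :=
    isCompact_univ_pi fun _ => hScompact
  obtain ⟨v, hvS, hvmax⟩ := hSk.exists_isMaxOn (Set.univ_pi_nonempty_iff.2 fun _ => ⟨0, hS0⟩)
    hGcont.continuousOn
  have hvmem : ∀ i, v i ∈ S := fun i => hvS i (Set.mem_univ i)
  -- the maximum is positive
  have hGpos : 0 < (gram v).det := by
    set u0 : Module.Basis (Fin k) ℝ ↥Kᗮ := Module.finBasisOfFinrankEq ℝ ↥Kᗮ hkdef.symm with hu0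
    set t : Fin k → Eucl d := fun i => (u0 i : Eucl d) with ht
    have htK : ∀ i, t i ∈ Kᗮ := fun i => (u0 i).2
    have htind : LinearIndependent ℝ t :=
      u0.linearIndependent.map' Kᗮ.subtype (Submodule.ker_subtype Kᗮ)
    have htp : ∀ i, 0 < p (t i) := by
      intro i
      rcases (apply_nonneg p (t i)).lt_or_eq with h | h
      · exact h
      · exfalso
        have h0 : t i = 0 := hpne _ (htK i) h.symm
        have : u0 i = 0 := Subtype.ext h0
        exact u0.ne_zero i this
    set w : Fin k → Eucl d := fun i => (p (t i))⁻¹ • t i with hwdef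
    have hwS : ∀ i, w i ∈ S := by
      intro i
      refine ⟨Submodule.smul_mem _ _ (htK i), ?_⟩
      rw [hwdef]
      simp only [map_smul_eq_mul, Real.norm_eq_abs, abs_of_pos (inv_pos.2 (htp i))]
      rw [inv_mul_cancel₀ (ne_of_gt (htp i))]
    have hwind : LinearIndependent ℝ w := by
      have h1 := htind.units_smul fun i => Units.mk0 ((p (t i))⁻¹)
        (inv_ne_zero (ne_of_gt (htp i)))
      convert h1 using 1
      exact funext fun i => rfl
    have h1 : 0 < (gram w).det := (gram_posDef w hwind).det_pos
    exact lt_of_lt_of_le h1 (hvmax fun i _ => hwS i)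
  -- v is independent; make a basis
  have hvindep : LinearIndependent ℝ v := indep_of_gram_det_ne v (ne_of_gt hGpos)
  -- build a basis of Kᗮ from the maximizer
  have hv'indep : LinearIndependent ℝ (fun i => (⟨v i, (hvmem i).1⟩ : ↥Kᗮ)) := by
    apply LinearIndependent.of_comp Kᗮ.subtype
    exact hvindep
  haveI : Nonempty (Fin k) := ⟨⟨0, hk0⟩⟩
  set b : Module.Basis (Fin k) ℝ ↥Kᗮ :=
    basisOfLinearIndependentOfCardEqFinrank hv'indep (by simp [hkdef]) with hbdef
  have hb : ∀ i, (b i : Eucl d) = v i := by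
    intro i
    rw [hbdef, coe_basisOfLinearIndependentOfCardEqFinrank]
  -- key estimate for coordinates
  have key : ∀ x : ↥Kᗮ, p ↑x ≤ 1 → ∀ i, |b.repr x i| ≤ 1 := by
    intro x hx i
    set a : Fin k → ℝ := fun j => b.repr x j with ha
    have hxa : (x : Eucl d) = ∑ j, a j • v j := by
      conv_lhs => rw [← b.sum_repr x]
      rw [Submodule.coe_sum]
      refine Finset.sum_congr rfl fun j _ => ?_
      rw [Submodule.coe_smul, hb j]
    have hmem : Function.update v i (↑x : Eucl d) ∈ Set.pi Set.univ (fun _ : Fin k => S) := by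
      intro j _
      by_cases hji : j = i
      · subst hji
        rw [Function.update_self]
        exact ⟨x.2, hx⟩
      · rw [Function.update_of_ne hji]
        exact hvmem j
    have h2 : (gram (Function.update v i (↑x : Eucl d))).det ≤ (gram v).det := hvmax hmem
    have h3 : (gram (Function.update v i (↑x : Eucl d))).det = a i ^ 2 * (gram v).det := by
      rw [hxa]
      exact gram_det_update v a i
    have h5 : a i ^ 2 ≤ 1 := by
      rw [h3] at h2
      by_contra hcon
      push_neg at hcon
      nlinarith
    nlinarith [abs_nonneg (a i), sq_abs (a i)]
  have key2 : ∀ x : ↥Kᗮ, ∀ i, |b.repr x i| ≤ p ↑x := by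
    intro x i
    by_cases hx0 : p ↑x = 0
    · have h0 : (x : Eucl d) = 0 := hpne _ x.2 hx0
      have hx' : x = 0 := Subtype.ext h0
      simp [hx', hx0]
    · have hpx : 0 < p ↑x := lt_of_le_of_ne (apply_nonneg p _) (Ne.symm hx0)
      have h1 : p ↑((p ↑x)⁻¹ • x) ≤ 1 := by
        rw [Submodule.coe_smul, map_smul_eq_mul, Real.norm_eq_abs,
          abs_of_pos (inv_pos.2 hpx), inv_mul_cancel₀ (ne_of_gt hpx)]
      have h2 := key _ h1 i
      rw [_root_.map_smul, Finsupp.smul_apply, smul_eq_mul, abs_mul,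
        abs_of_pos (inv_pos.2 hpx)] at h2
      calc |b.repr x i| = p ↑x * ((p ↑x)⁻¹ * |b.repr x i|) := by
            rw [← mul_assoc, mul_inv_cancel₀ (ne_of_gt hpx), one_mul]
      _ ≤ p ↑x * 1 := mul_le_mul_of_nonneg_left h2 hpx.le
      _ = p ↑x := mul_one _
  -- projection and coefficient functions
  set pr : Eucl d → ↥Kᗮ := fun u => Kᗮ.orthogonalProjectionOnto u with hpr
  have hppr : ∀ u, p u = p ↑(pr u) := by
    intro u
    have h1 : u - ↑(pr u) ∈ Kᗮᗮ := Kᗮ.sub_starProjection_mem_orthogonal u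
    rw [Submodule.orthogonal_orthogonal] at h1
    have h2 : p (u - ↑(pr u)) = 0 := mem_pker.1 h1
    have h3 := abs_sub_map_le_sub p u ↑(pr u)
    rw [h2] at h3
    have h4 : p u - p ↑(pr u) = 0 := by
      have := abs_nonneg (p u - p ↑(pr u))
      have h5 : |p u - p ↑(pr u)| = 0 := le_antisymm h3 this
      exact abs_eq_zero.1 h5
    linarith
  set fc : Eucl d → Fin k → ℝ := fun u i => b.repr (pr u) i with hfc
  have hfc_le : ∀ u i, |fc u i| ≤ p u := by
    intro u i
    rw [hppr u]
    exact key2 (pr u) i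
  have hsum : ∀ u, ((pr u : ↥Kᗮ) : Eucl d) = ∑ i, fc u i • v i := by
    intro u
    conv_lhs => rw [← b.sum_repr (pr u)]
    rw [Submodule.coe_sum]
    refine Finset.sum_congr rfl fun j _ => ?_
    rw [Submodule.coe_smul, hb j]
  have hlow : ∀ u, p u ≤ ∑ i, |fc u i| := by
    intro u
    rw [hppr u]
    calc p ↑(pr u) = p (∑ i, fc u i • v i) := by rw [hsum]
    _ ≤ ∑ i, p (fc u i • v i) :=
        Finset.le_sum_of_subadditive p (map_zero p).le (map_add_le_add p) _ _
    _ ≤ ∑ i, |fc u i| := by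
        refine Finset.sum_le_sum fun i _ => ?_
        rw [map_smul_eq_mul, Real.norm_eq_abs]
        calc |fc u i| * p (v i) ≤ |fc u i| * 1 :=
              mul_le_mul_of_nonneg_left (hvmem i).2 (abs_nonneg _)
        _ = |fc u i| := mul_one _
  -- the linear map
  set A : Eucl d →ₗ[ℝ] Eucl d := Real.sqrt k •
    ((embed d k) ∘ₗ (b.equivFun.toLinearMap ∘ₗ
      (Kᗮ.orthogonalProjectionOnto : Eucl d →L[ℝ] ↥Kᗮ).toLinearMap)) with hA
  have hAu : ∀ u, ‖A u‖ = Real.sqrt k * Real.sqrt (∑ i, fc u i ^ 2) := by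
    intro u
    have h1 : A u = Real.sqrt k • embed d k (fc u) := by
      rw [hA]
      rfl
    rw [h1, norm_smul, norm_embed hkd, Real.norm_eq_abs,
      abs_of_nonneg (Real.sqrt_nonneg _)]
  have hkR : (0:ℝ) ≤ (k:ℝ) := Nat.cast_nonneg k
  refine ⟨A, fun u => ⟨?_, ?_⟩⟩
  · rw [hAu u]
    have h2 : (∑ i, |fc u i|) ^ 2 ≤ (k:ℝ) * ∑ i, fc u i ^ 2 := by
      have h3 := sq_sum_le_card_mul_sum_sq (s := (Finset.univ : Finset (Fin k)))
        (f := fun i => |fc u i|)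
      simpa [sq_abs] using h3
    calc p u ≤ ∑ i, |fc u i| := hlow u
    _ = Real.sqrt ((∑ i, |fc u i|) ^ 2) :=
        (Real.sqrt_sq (Finset.sum_nonneg fun i _ => abs_nonneg _)).symm
    _ ≤ Real.sqrt ((k:ℝ) * ∑ i, fc u i ^ 2) := Real.sqrt_le_sqrt h2
    _ = Real.sqrt k * Real.sqrt (∑ i, fc u i ^ 2) := Real.sqrt_mul hkR _
  · rw [hAu u]
    have h3 : ∑ i, fc u i ^ 2 ≤ (k:ℝ) * p u ^ 2 := by
      calc ∑ i, fc u i ^ 2 ≤ ∑ _i : Fin k, p u ^ 2 := by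
            refine Finset.sum_le_sum fun i _ => ?_
            nlinarith [hfc_le u i, abs_nonneg (fc u i), sq_abs (fc u i), apply_nonneg p u]
      _ = (k:ℝ) * p u ^ 2 := by
            rw [Finset.sum_const, Finset.card_univ, Fintype.card_fin, nsmul_eq_mul]
    calc Real.sqrt k * Real.sqrt (∑ i, fc u i ^ 2)
        ≤ Real.sqrt k * Real.sqrt ((k:ℝ) * p u ^ 2) :=
          mul_le_mul_of_nonneg_left (Real.sqrt_le_sqrt h3) (Real.sqrt_nonneg _)
    _ = Real.sqrt k * (Real.sqrt k * p u) := by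
          rw [Real.sqrt_mul hkR, Real.sqrt_sq (apply_nonneg p u)]
    _ = Real.sqrt k ^ 2 * p u := by ring
    _ = (k:ℝ) * p u := by rw [Real.sq_sqrt hkR]
    _ ≤ (d:ℝ) * p u := mul_le_mul_of_nonneg_right (Nat.cast_le.2 hkd) (apply_nonneg p u)


end SJ

/-- **Lemma on seminorms (F. John).** For every seminorm on `ℝ^d` there is a linear map
`A` with `‖v‖ ≤ |Av| ≤ C‖v‖` for all `v`, where one may take `C = d`. -/
theorem seminorm_comparable_to_linear_map (d : ℕ) (hd : 0 < d) :
    ∃ C : ℝ, 0 < C ∧ C = d ∧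
      ∀ p : Seminorm ℝ (Eucl d),
        ∃ A : Eucl d →ₗ[ℝ] Eucl d, ∀ v : Eucl d, p v ≤ ‖A v‖ ∧ ‖A v‖ ≤ C * p v :=
  SJ.main d hd
end
end

section
/- For all nonnegative integers n, m there is a constant c₀ = c₀(n,m) > 0 with the following property: let ‖·‖ be a seminorm on ℝ^{n+m}, let δ > 0, and suppose there is an n-dimensional linear subspace P ⊆ ℝ^{n+m} such that ‖v‖ ≥ δ|v| for all v ∈ P. Then there is an orthonormal basis v_1, …, v_{n+m} of ℝ^{n+m} such that ‖Σ_{i=1}^{n+m} a_i v_i‖ ≥ c₀·δ·Σ_{i=1}^n |a_i| for all choices of a_1, …, a_{n+m} ∈ ℝ. -/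
open scoped ENNReal NNReal
open Set

noncomputable section

section AdaptedBasisHelpers

open Finset Submodule Module

variable {D : ℕ}

local notation "⟪" x ", " y "⟫" => @inner ℝ _ _ x y

private lemma seminorm_bound (p : Seminorm ℝ (Eucl D)) :
    ∃ C : ℝ, 0 ≤ C ∧ ∀ x, p x ≤ C * ‖x‖ := by
  set b := EuclideanSpace.basisFun (Fin D) ℝ
  refine ⟨∑ i : Fin D, p (b i), Finset.sum_nonneg fun i _ => apply_nonneg p _, fun x => ?_⟩
  have hx : x = ∑ i : Fin D, b.repr x i • b i := (b.sum_repr x).symm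
  calc p x = p (∑ i : Fin D, b.repr x i • b i) := by rw [← hx]
    _ ≤ ∑ i : Fin D, p (b.repr x i • b i) :=
        Finset.le_sum_of_subadditive p (map_zero p).le (map_add_le_add p) _ _
    _ ≤ ∑ i : Fin D, p (b i) * ‖x‖ := by
        refine Finset.sum_le_sum fun i _ => ?_
        rw [map_smul_eq_mul]
        have h1 : ‖b.repr x i‖ ≤ ‖x‖ := by
          rw [b.repr_apply_apply]
          calc ‖⟪b i, x⟫‖ = |⟪b i, x⟫| := rfl
            _ ≤ ‖b i‖ * ‖x‖ := abs_real_inner_le_norm _ _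
            _ = ‖x‖ := by rw [b.orthonormal.1 i, one_mul]
        calc ‖b.repr x i‖ * p (b i) ≤ ‖x‖ * p (b i) :=
              mul_le_mul_of_nonneg_right h1 (apply_nonneg p _)
          _ = p (b i) * ‖x‖ := mul_comm _ _
    _ = (∑ i : Fin D, p (b i)) * ‖x‖ := by rw [Finset.sum_mul]

private lemma seminorm_cont (p : Seminorm ℝ (Eucl D)) : Continuous p := by
  obtain ⟨C, hC0, hC⟩ := seminorm_bound p
  have h : ∀ x y : Eucl D, dist (p x) (p y) ≤ C * dist x y := by
    intro x y
    rw [Real.dist_eq, dist_eq_norm]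
    exact (abs_sub_map_le_sub p x y).trans (hC _)
  exact (LipschitzWith.of_dist_le_mul (K := ⟨C, hC0⟩) h).continuous

open Classical in
private noncomputable def nextVec (p : Seminorm ℝ (Eucl D)) (W : Submodule ℝ (Eucl D)) :
    Eucl D :=
  if h : ∃ v, v ∈ Wᗮ ∧ ‖v‖ = 1 ∧ ∀ w ∈ Wᗮ, ‖w‖ = 1 → p v ≤ p w then h.choose else 0

private lemma nextVec_spec (p : Seminorm ℝ (Eucl D)) (W : Submodule ℝ (Eucl D))
    (hW : Wᗮ ≠ ⊥) :
    nextVec p W ∈ Wᗮ ∧ ‖nextVec p W‖ = 1 ∧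
      ∀ w ∈ Wᗮ, ‖w‖ = 1 → p (nextVec p W) ≤ p w := by
  have hex : ∃ v, v ∈ Wᗮ ∧ ‖v‖ = 1 ∧ ∀ w ∈ Wᗮ, ‖w‖ = 1 → p v ≤ p w := by
    obtain ⟨v₀, hv₀, hv₀0⟩ := (Submodule.ne_bot_iff _).mp hW
    have hn0 : ‖v₀‖ ≠ 0 := norm_ne_zero_iff.mpr hv₀0
    set S : Set (Eucl D) := (Wᗮ : Set (Eucl D)) ∩ Metric.sphere 0 1 with hS
    have hSc : IsCompact S :=
      (isCompact_sphere (0 : Eucl D) 1).inter_left (Wᗮ.closed_of_finiteDimensional)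
    have hSne : S.Nonempty := by
      refine ⟨‖v₀‖⁻¹ • v₀, Wᗮ.smul_mem _ hv₀, ?_⟩
      rw [mem_sphere_zero_iff_norm, norm_smul, norm_inv, norm_norm, inv_mul_cancel₀ hn0]
    obtain ⟨v, hvS, hmin⟩ := hSc.exists_isMinOn hSne ((seminorm_cont p).continuousOn)
    refine ⟨v, hvS.1, mem_sphere_zero_iff_norm.mp hvS.2, fun w hw hw1 => ?_⟩
    exact hmin ⟨hw, mem_sphere_zero_iff_norm.mpr hw1⟩
  simp only [nextVec]
  rw [dif_pos hex]
  exact hex.choose_spec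

private noncomputable def seqAux (p : Seminorm ℝ (Eucl D)) : ℕ → ℕ → Eucl D
  | 0 => fun _ => 0
  | k+1 => fun j =>
      if j = k then nextVec p (Submodule.span ℝ (seqAux p k '' Set.Iio k))
      else seqAux p k j

private noncomputable def seqVec (p : Seminorm ℝ (Eucl D)) (k : ℕ) : Eucl D :=
  seqAux p (k+1) k

private lemma seqAux_stable (p : Seminorm ℝ (Eucl D)) :
    ∀ k j, j < k → seqAux p k j = seqVec p j := by
  intro k
  induction k with
  | zero => intro j hj; omega
  | succ k ih =>
    intro j hj
    rcases eq_or_lt_of_le (Nat.lt_succ_iff.mp hj) with h | h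
    · subst h; rfl
    · show seqAux p (k+1) j = seqVec p j
      simp only [seqAux]
      rw [if_neg (by omega)]
      exact ih j h

private def Wspan (p : Seminorm ℝ (Eucl D)) (k : ℕ) : Submodule ℝ (Eucl D) :=
  Submodule.span ℝ (seqVec p '' Set.Iio k)

private lemma seqVec_eq (p : Seminorm ℝ (Eucl D)) (k : ℕ) :
    seqVec p k = nextVec p (Wspan p k) := by
  have himg : seqAux p k '' Set.Iio k = seqVec p '' Set.Iio k :=
    Set.image_congr fun j hj => seqAux_stable p k j hj
  show seqAux p (k+1) k = _
  simp only [seqAux, if_true]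
  show nextVec p (Submodule.span ℝ (seqAux p k '' Set.Iio k)) = _
  rw [himg]
  rfl

private lemma wspan_orth_ne_bot (p : Seminorm ℝ (Eucl D)) {k : ℕ} (hk : k < D) :
    (Wspan p k)ᗮ ≠ ⊥ := by
  have h0 : seqVec p '' Set.Iio k = Set.range (fun j : Fin k => seqVec p j) := by
    ext x
    constructor
    · rintro ⟨j, hj, rfl⟩; exact ⟨⟨j, hj⟩, rfl⟩
    · rintro ⟨j, rfl⟩; exact ⟨j, j.2, rfl⟩
  have h1 : finrank ℝ (Wspan p k) ≤ k := by
    have h2 := finrank_range_le_card (R := ℝ) (fun j : Fin k => seqVec p (j : ℕ))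
    rw [Fintype.card_fin] at h2
    rw [Wspan, h0]
    exact h2
  intro hbot
  have h2 := (Wspan p k).finrank_add_finrank_orthogonal
  rw [hbot, finrank_bot, finrank_euclideanSpace_fin, add_zero] at h2
  omega

private lemma seq_spec (p : Seminorm ℝ (Eucl D)) {k : ℕ} (hk : k < D) :
    seqVec p k ∈ (Wspan p k)ᗮ ∧ ‖seqVec p k‖ = 1 ∧
      ∀ w ∈ (Wspan p k)ᗮ, ‖w‖ = 1 → p (seqVec p k) ≤ p w := by
  rw [seqVec_eq]
  exact nextVec_spec p _ (wspan_orth_ne_bot p hk)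

private lemma seq_inner (p : Seminorm ℝ (Eucl D)) {j k : ℕ} (hjk : j < k) (hk : k < D) :
    ⟪seqVec p j, seqVec p k⟫ = 0 := by
  have h1 : seqVec p j ∈ Wspan p k := Submodule.subset_span ⟨j, hjk, rfl⟩
  exact (Submodule.mem_orthogonal _ _).mp (seq_spec p hk).1 _ h1

private lemma mem_orth (p : Seminorm ℝ (Eucl D)) (k : ℕ) (v : Eucl D)
    (hv : ∀ j < k, ⟪seqVec p j, v⟫ = 0) : v ∈ (Wspan p k)ᗮ := by
  rw [Submodule.mem_orthogonal]
  intro x hx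
  induction hx using Submodule.span_induction with
  | mem x hx => obtain ⟨j, hj, rfl⟩ := hx; exact hv j hj
  | zero => exact inner_zero_left v
  | add x y _ _ hx hy => rw [inner_add_left, hx, hy, add_zero]
  | smul c x _ hx => rw [real_inner_smul_left, hx, mul_zero]

private lemma seq_min (p : Seminorm ℝ (Eucl D)) {k : ℕ} (hk : k < D) (v : Eucl D)
    (hv : ∀ j < k, ⟪seqVec p j, v⟫ = 0) : p (seqVec p k) * ‖v‖ ≤ p v := by
  rcases eq_or_ne v 0 with rfl | hv0
  · simp
  · have h1 : ‖v‖ ≠ 0 := norm_ne_zero_iff.mpr hv0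
    have h2 : ‖v‖⁻¹ • v ∈ (Wspan p k)ᗮ := Submodule.smul_mem _ _ (mem_orth p k v hv)
    have h3 : ‖‖v‖⁻¹ • v‖ = 1 := by
      rw [norm_smul, norm_inv, norm_norm, inv_mul_cancel₀ h1]
    have h4 := (seq_spec p hk).2.2 _ h2 h3
    rw [map_smul_eq_mul, norm_inv, norm_norm] at h4
    calc p (seqVec p k) * ‖v‖ ≤ (‖v‖⁻¹ * p v) * ‖v‖ :=
          mul_le_mul_of_nonneg_right h4 (norm_nonneg v)
      _ = p v := by field_simp

private lemma seq_mono (p : Seminorm ℝ (Eucl D)) {j k : ℕ} (hjk : j ≤ k) (hk : k < D) :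
    p (seqVec p j) ≤ p (seqVec p k) := by
  rcases eq_or_lt_of_le hjk with rfl | h
  · exact le_rfl
  · have h1 := seq_min p (show j < D by omega) (seqVec p k)
      (fun i hi => seq_inner p (by omega) hk)
    rwa [(seq_spec p hk).2.1, mul_one] at h1

private lemma seq_orthonormal (p : Seminorm ℝ (Eucl D)) {l : ℕ} (hl : l ≤ D) :
    Orthonormal ℝ (fun i : Fin l => seqVec p (i : ℕ)) := by
  rw [orthonormal_iff_ite]
  intro i j
  rcases lt_trichotomy (i : ℕ) (j : ℕ) with h | h | h
  · rw [if_neg (by intro hij; exact absurd (congrArg Fin.val hij) (by omega)),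
      seq_inner p h (by omega)]
  · have hij : i = j := Fin.ext h
    subst hij
    rw [if_pos rfl, real_inner_self_eq_norm_mul_norm,
      (seq_spec p (show (i:ℕ) < D by omega)).2.1, one_mul]
  · rw [if_neg (by intro hij; exact absurd (congrArg Fin.val hij) (by omega)),
      real_inner_comm, seq_inner p h (by omega)]

private lemma key_induction (p : Seminorm ℝ (Eucl D)) :
    ∀ t k, k + t = D → ∀ a : ℕ → ℝ,
      (4:ℝ)⁻¹ ^ t * ∑ j ∈ Finset.Ico k D, |a j| * p (seqVec p j)
        ≤ p (∑ j ∈ Finset.Ico k D, a j • seqVec p j) := by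
  intro t
  induction t with
  | zero =>
    intro k hk a
    have : k = D := by omega
    subst this
    simp
  | succ t ih =>
    intro k hk a
    have hkD : k < D := by omega
    have ihk := ih (k+1) (by omega) a
    set v := ∑ j ∈ Finset.Ico (k+1) D, a j • seqVec p j with hv
    set total := ∑ j ∈ Finset.Ico k D, a j • seqVec p j with htotal
    have hsplit : total = a k • seqVec p k + v := by
      rw [htotal, Finset.sum_eq_sum_Ico_succ_bot hkD]
    have hsplit' : ∑ j ∈ Finset.Ico k D, |a j| * p (seqVec p j)
        = |a k| * p (seqVec p k) + ∑ j ∈ Finset.Ico (k+1) D, |a j| * p (seqVec p j) :=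
      Finset.sum_eq_sum_Ico_succ_bot hkD _
    have h1 : ∀ i < k, ⟪seqVec p i, total⟫ = 0 := by
      intro i hi
      rw [htotal, inner_sum]
      apply Finset.sum_eq_zero
      intro j hj
      obtain ⟨hj1, hj2⟩ := Finset.mem_Ico.mp hj
      rw [real_inner_smul_right, seq_inner p (by omega) hj2, mul_zero]
    have h2 : p (seqVec p k) * |a k| ≤ p total := by
      have hik : ⟪seqVec p k, total⟫ = a k := by
        rw [htotal, inner_sum]
        rw [Finset.sum_eq_single k]
        · rw [real_inner_smul_right, real_inner_self_eq_norm_mul_norm,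
            (seq_spec p hkD).2.1, one_mul, mul_one]
        · intro j hj hne
          obtain ⟨hj1, hj2⟩ := Finset.mem_Ico.mp hj
          rw [real_inner_smul_right, seq_inner p (by omega) hj2, mul_zero]
        · intro hk'
          exact absurd (Finset.mem_Ico.mpr ⟨le_rfl, hkD⟩) hk'
      have hbnd : |a k| ≤ ‖total‖ := by
        calc |a k| = |⟪seqVec p k, total⟫| := by rw [hik]
          _ ≤ ‖seqVec p k‖ * ‖total‖ := abs_real_inner_le_norm _ _
          _ = ‖total‖ := by rw [(seq_spec p hkD).2.1, one_mul]
      calc p (seqVec p k) * |a k| ≤ p (seqVec p k) * ‖total‖ :=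
            mul_le_mul_of_nonneg_left hbnd (apply_nonneg p _)
        _ ≤ p total := seq_min p hkD total h1
    have h3 : p v ≤ p total + |a k| * p (seqVec p k) := by
      have hveq : v = total - a k • seqVec p k := by rw [hsplit]; abel
      rw [hveq]
      calc p (total - a k • seqVec p k) ≤ p total + p (a k • seqVec p k) :=
            map_sub_le_add p _ _
        _ = p total + |a k| * p (seqVec p k) := by
            rw [map_smul_eq_mul, Real.norm_eq_abs]
    have hc0 : (0:ℝ) < (4:ℝ)⁻¹ ^ t := by positivity
    have hc1 : (4:ℝ)⁻¹ ^ t ≤ 1 := pow_le_one₀ (by norm_num) (by norm_num)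
    have hS0 : 0 ≤ ∑ j ∈ Finset.Ico (k+1) D, |a j| * p (seqVec p j) :=
      Finset.sum_nonneg fun j _ => mul_nonneg (abs_nonneg _) (apply_nonneg p _)
    have hA0 : 0 ≤ |a k| * p (seqVec p k) := mul_nonneg (abs_nonneg _) (apply_nonneg p _)
    have hP0 : 0 ≤ p total := apply_nonneg p _
    rw [hsplit', pow_succ]
    nlinarith [mul_le_of_le_one_left hA0 hc1, ihk, h3, h2,
      mul_le_of_le_one_left hS0 hc1]

private lemma s_lower (p : Seminorm ℝ (Eucl D)) {n m : ℕ} (hD : n + m = D) (hn : 0 < n)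
    (δ : ℝ) (hδ : 0 < δ) (P : Submodule ℝ (Eucl D)) (hP : finrank ℝ P = n)
    (hlow : ∀ v ∈ P, δ * ‖v‖ ≤ p v) :
    δ ≤ (m + 1 : ℝ) * p (seqVec p m) := by
  have hmD : m < D := by omega
  have horth : Orthonormal ℝ (fun j : Fin (m+1) => seqVec p (j : ℕ)) :=
    seq_orthonormal p (by omega)
  set Q : Submodule ℝ (Eucl D) :=
    Submodule.span ℝ (Set.range fun j : Fin (m+1) => seqVec p (j : ℕ)) with hQ
  have hQrank : finrank ℝ Q = m + 1 := by
    rw [hQ, finrank_span_eq_card horth.linearIndependent]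
    simp
  have hPQ : P ⊓ Q ≠ ⊥ := by
    intro hbot
    have h1 := Submodule.finrank_sup_add_finrank_inf_eq P Q
    have h2 : finrank ℝ ↥(P ⊔ Q) ≤ D := by
      have h3 := Submodule.finrank_le (P ⊔ Q)
      rwa [finrank_euclideanSpace_fin] at h3
    rw [hbot, finrank_bot, hP, hQrank] at h1
    omega
  obtain ⟨x, hx, hx0⟩ := (Submodule.ne_bot_iff _).mp hPQ
  have hxnorm : ‖x‖ ≠ 0 := norm_ne_zero_iff.mpr hx0
  set w := ‖x‖⁻¹ • x with hw
  have hw1 : ‖w‖ = 1 := by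
    rw [hw, norm_smul, norm_inv, norm_norm, inv_mul_cancel₀ hxnorm]
  have hwP : w ∈ P := Submodule.smul_mem _ _ (Submodule.mem_inf.mp hx).1
  have hwQ : w ∈ Q := Submodule.smul_mem _ _ (Submodule.mem_inf.mp hx).2
  have hδw : δ ≤ p w := by
    have h := hlow w hwP
    rwa [hw1, mul_one] at h
  obtain ⟨c, hc⟩ := (mem_span_range_iff_exists_fun ℝ).mp hwQ
  have hcb : ∀ j : Fin (m+1), |c j| ≤ 1 := by
    intro j
    have h1 : ⟪seqVec p (j : ℕ), w⟫ = c j := by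
      rw [← hc]
      exact horth.inner_right_fintype c j
    calc |c j| = |⟪seqVec p (j : ℕ), w⟫| := by rw [h1]
      _ ≤ ‖seqVec p (j : ℕ)‖ * ‖w‖ := abs_real_inner_le_norm _ _
      _ = 1 := by rw [(seq_spec p (show (j:ℕ) < D by omega)).2.1, hw1, one_mul]
  have hub : p w ≤ (m+1 : ℝ) * p (seqVec p m) := by
    calc p w = p (∑ j : Fin (m+1), c j • seqVec p (j : ℕ)) := by rw [hc]
      _ ≤ ∑ j : Fin (m+1), p (c j • seqVec p (j : ℕ)) :=
          Finset.le_sum_of_subadditive p (map_zero p).le (map_add_le_add p) _ _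
      _ ≤ ∑ _j : Fin (m+1), p (seqVec p m) := by
          refine Finset.sum_le_sum fun j _ => ?_
          rw [map_smul_eq_mul, Real.norm_eq_abs]
          calc |c j| * p (seqVec p (j : ℕ)) ≤ 1 * p (seqVec p m) :=
                mul_le_mul (hcb j) (seq_mono p (by omega) hmD) (apply_nonneg p _) zero_le_one
            _ = p (seqVec p m) := one_mul _
      _ = (m+1 : ℝ) * p (seqVec p m) := by
          rw [Finset.sum_const, Finset.card_univ, Fintype.card_fin, nsmul_eq_mul]
          push_cast
          ring
  linarith

end AdaptedBasisHelpers

/-- **Lemma (adapted orthonormal basis).** If a seminorm on `ℝ^{n+m}` dominates `δ` times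
the Euclidean norm on some `n`-dimensional subspace, then there is an orthonormal basis
`v₁, …, v_{n+m}` with `‖Σ aᵢvᵢ‖ ≳ δ Σ_{i ≤ n} |aᵢ|`. -/
theorem seminorm_adapted_orthonormal_basis (n m : ℕ) :
    ∃ c₀ > (0:ℝ),
      ∀ p : Seminorm ℝ (Eucl (n + m)), ∀ δ > (0:ℝ),
        ∀ P : Submodule ℝ (Eucl (n + m)), Module.finrank ℝ P = n →
          (∀ v ∈ P, δ * ‖v‖ ≤ p v) →
          ∃ v : Fin (n + m) → Eucl (n + m),
            Orthonormal ℝ v ∧ Submodule.span ℝ (Set.range v) = ⊤ ∧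
            ∀ a : Fin (n + m) → ℝ,
              c₀ * δ * ∑ i : Fin n, |a (Fin.castAdd m i)| ≤ p (∑ i, a i • v i) := by
  refine ⟨(4:ℝ)⁻¹ ^ (n+m) / (m+1), by positivity, ?_⟩
  intro p δ hδ P hP hlow
  have horthD : Orthonormal ℝ (fun i : Fin (n+m) => seqVec p (i : ℕ)) :=
    seq_orthonormal p le_rfl
  have horth : Orthonormal ℝ (fun i : Fin (n+m) => seqVec p ((Fin.rev i : Fin (n+m)) : ℕ)) :=
    horthD.comp Fin.rev Fin.rev_injective
  refine ⟨fun i => seqVec p ((Fin.rev i : Fin (n+m)) : ℕ), horth, ?_, ?_⟩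
  · exact horth.linearIndependent.span_eq_top_of_card_eq_finrank'
      (by rw [finrank_euclideanSpace_fin, Fintype.card_fin])
  · intro a
    rcases Nat.eq_zero_or_pos n with hn | hn
    · have hzero : ∑ i : Fin n, |a (Fin.castAdd m i)| = 0 := by
        subst hn; simp
      rw [hzero, mul_zero]
      exact apply_nonneg p _
    · set b : ℕ → ℝ := fun j => if h : j < n + m then a (Fin.rev ⟨j, h⟩) else 0 with hb
      have hclaim1 : (∑ i : Fin (n+m), a i • seqVec p ((Fin.rev i : Fin (n+m)) : ℕ))
          = ∑ j ∈ Finset.Ico 0 (n+m), b j • seqVec p j := by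
        rw [← Finset.range_eq_Ico, ← Fin.sum_univ_eq_sum_range (fun j => b j • seqVec p j)]
        refine Fintype.sum_bijective Fin.rev Fin.rev_bijective _ _ fun i => ?_
        have hbv : b ((Fin.rev i : Fin (n+m)) : ℕ) = a i := by
          rw [hb]
          simp only [dif_pos (Fin.rev i).isLt]
          congr 1
          rw [Fin.eta, Fin.rev_rev]
        rw [hbv]
      have hkey := key_induction p (n+m) 0 (by omega) b
      have hslow := s_lower p rfl hn δ hδ P hP hlow
      have e1 : ∑ i : Fin n, |a (Fin.castAdd m i)| = ∑ j ∈ Finset.Ico m (n+m), |b j| := by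
        refine Finset.sum_nbij' (fun i : Fin n => n + m - 1 - (i : ℕ))
          (fun j : ℕ => (⟨n - 1 - (j - m), by omega⟩ : Fin n)) ?_ ?_ ?_ ?_ ?_
        · intro i _
          have := i.2
          exact Finset.mem_Ico.mpr ⟨by omega, by omega⟩
        · intro j _
          exact Finset.mem_univ _
        · intro i _
          have := i.2
          apply Fin.ext
          show n - 1 - (n + m - 1 - (i:ℕ) - m) = (i:ℕ)
          omega
        · intro j hj
          obtain ⟨hj1, hj2⟩ := Finset.mem_Ico.mp hj
          dsimp only
          omega
        · intro i _
          have hiD : n + m - 1 - (i : ℕ) < n + m := by have := i.2; omega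
          have hbv : b (n + m - 1 - (i : ℕ)) = a (Fin.rev ⟨n + m - 1 - (i : ℕ), hiD⟩) := by
            rw [hb]; simp only [dif_pos hiD]
          rw [hbv]
          congr 2
          apply Fin.ext
          rw [Fin.val_rev]
          have := i.2
          simp only [Fin.coe_castAdd]
          omega
      have hsum : p (seqVec p m) * ∑ i : Fin n, |a (Fin.castAdd m i)|
          ≤ ∑ j ∈ Finset.Ico 0 (n+m), |b j| * p (seqVec p j) := by
        rw [e1, Finset.mul_sum]
        calc ∑ j ∈ Finset.Ico m (n+m), p (seqVec p m) * |b j|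
            ≤ ∑ j ∈ Finset.Ico m (n+m), |b j| * p (seqVec p j) := by
              refine Finset.sum_le_sum fun j hj => ?_
              obtain ⟨hj1, hj2⟩ := Finset.mem_Ico.mp hj
              rw [mul_comm]
              exact mul_le_mul_of_nonneg_left (seq_mono p hj1 hj2) (abs_nonneg _)
          _ ≤ ∑ j ∈ Finset.Ico 0 (n+m), |b j| * p (seqVec p j) := by
              refine Finset.sum_le_sum_of_subset_of_nonneg
                (Finset.Ico_subset_Ico (Nat.zero_le m) le_rfl) fun j _ _ => ?_
              exact mul_nonneg (abs_nonneg _) (apply_nonneg p _)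
      rw [hclaim1]
      have hc0 : (0:ℝ) < (4:ℝ)⁻¹ ^ (n+m) := by positivity
      have hm1 : (0:ℝ) < (m:ℝ) + 1 := by positivity
      have hSig0 : 0 ≤ ∑ i : Fin n, |a (Fin.castAdd m i)| :=
        Finset.sum_nonneg fun i _ => abs_nonneg _
      calc (4:ℝ)⁻¹ ^ (n+m) / (m+1) * δ * ∑ i : Fin n, |a (Fin.castAdd m i)|
          ≤ (4:ℝ)⁻¹ ^ (n+m) / (m+1) * ((m+1) * p (seqVec p m))
              * ∑ i : Fin n, |a (Fin.castAdd m i)| := by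
            refine mul_le_mul_of_nonneg_right ?_ hSig0
            exact mul_le_mul_of_nonneg_left hslow (by positivity)
        _ = (4:ℝ)⁻¹ ^ (n+m) * (p (seqVec p m) * ∑ i : Fin n, |a (Fin.castAdd m i)|) := by
            field_simp
        _ ≤ (4:ℝ)⁻¹ ^ (n+m) * ∑ j ∈ Finset.Ico 0 (n+m), |b j| * p (seqVec p j) :=
            mul_le_mul_of_nonneg_left hsum hc0.le
        _ ≤ p (∑ j ∈ Finset.Ico 0 (n+m), b j • seqVec p j) := hkey
end
end

section
/- Fix a positive integer d. Let f_i : [0,1]^d → Y_i be a sequence of 1-Lipschitz maps onto metric spaces Y_i. Then there exist a compact set Y ⊆ ℓ^∞, a 1-Lipschitz map f : [0,1]^d → ℓ^∞ with image Y, a subsequence {f_{i_k}}, and isometric embeddings ι_k : Y_{i_k} → ℓ^∞ such that sup_{x∈[0,1]^d} ‖ι_k(f_{i_k}(x)) − f(x)‖_∞ → 0 as k → ∞; in particular, dist(f_{i_k}, f) → 0. -/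
open scoped ENNReal NNReal
open Set

noncomputable section

/-! ### Auxiliary material for the compactness lemma -/

section CompactnessAux

lemma unitCube_isCompact (d : ℕ) : IsCompact (unitCube d) := by
  have h : unitCube d = (PiLp.homeomorph 2 (fun _ : Fin d => ℝ)) ⁻¹' Set.pi Set.univ (fun _ : Fin d => Set.Icc (0:ℝ) 1) := by
    ext x
    constructor
    · intro hx i _
      exact hx i
    · intro hx i
      exact hx i (Set.mem_univ i)
  rw [h]
  exact (PiLp.homeomorph 2 _).isCompact_preimage.2 (isCompact_univ_pi fun _ => isCompact_Icc)

lemma unitCube_nonempty (d : ℕ) : (unitCube d).Nonempty :=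
  ⟨0, fun i => by simp⟩

variable {Z : Type*} [MetricSpace Z]

/-- Kuratowski-type embedding sequence associated to a sequence of points `p`. -/
noncomputable def embSeq (p : ℕ → Z) (y : Z) : ℕ → ℝ :=
  fun n => dist y (p n) - dist (p 0) (p n)

lemma embSeq_memℓp (p : ℕ → Z) (y : Z) : Memℓp (embSeq p y) ⊤ := by
  apply memℓp_infty
  refine ⟨dist y (p 0), ?_⟩
  rintro - ⟨n, rfl⟩
  simpa [embSeq, Real.norm_eq_abs] using abs_dist_sub_le y (p 0) (p n)

/-- Kuratowski-type embedding into `ℓ^∞`. -/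
noncomputable def embIso (p : ℕ → Z) (y : Z) : ellInfty :=
  ⟨embSeq p y, embSeq_memℓp p y⟩

lemma embIso_apply (p : ℕ → Z) (y : Z) (n : ℕ) :
    (embIso p y) n = dist y (p n) - dist (p 0) (p n) := rfl

lemma embIso_sub_apply (p : ℕ → Z) (y y' : Z) (n : ℕ) :
    (embIso p y - embIso p y') n = embSeq p y n - embSeq p y' n := by
  simp [embIso]; rfl

lemma embSeq_diff1 (p : ℕ → Z) (y y' : Z) (n : ℕ) :
    |embSeq p y n - embSeq p y' n| ≤ dist y y' := by
  have h : embSeq p y n - embSeq p y' n = dist y (p n) - dist y' (p n) := by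
    simp only [embSeq]; ring
  rw [h]
  exact abs_dist_sub_le y y' (p n)

lemma embSeq_diff2 (p : ℕ → Z) (y : Z) (n n' : ℕ) :
    |embSeq p y n - embSeq p y n'| ≤ 2 * dist (p n) (p n') := by
  have h : embSeq p y n - embSeq p y n' =
      (dist y (p n) - dist y (p n')) - (dist (p 0) (p n) - dist (p 0) (p n')) := by
    simp only [embSeq]; ring
  have h1 : |dist y (p n) - dist y (p n')| ≤ dist (p n) (p n') := by
    rw [dist_comm y (p n), dist_comm y (p n')]
    exact abs_dist_sub_le (p n) (p n') y
  have h2 : |dist (p 0) (p n) - dist (p 0) (p n')| ≤ dist (p n) (p n') := by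
    rw [dist_comm (p 0) (p n), dist_comm (p 0) (p n')]
    exact abs_dist_sub_le (p n) (p n') (p 0)
  calc |embSeq p y n - embSeq p y n'|
      ≤ |dist y (p n) - dist y (p n')| + |dist (p 0) (p n) - dist (p 0) (p n')| := by
        rw [h]; exact abs_sub (dist y (p n) - dist y (p n')) _
    _ ≤ 2 * dist (p n) (p n') := by linarith

lemma embIso_norm_sub_le (p : ℕ → Z) (y y' : Z) :
    ‖embIso p y - embIso p y'‖ ≤ dist y y' := by
  refine lp.norm_le_of_forall_le dist_nonneg fun n => ?_
  rw [embIso_sub_apply, Real.norm_eq_abs]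
  exact embSeq_diff1 p y y' n

lemma embIso_isometry (p : ℕ → Z)
    (hdense : ∀ y : Z, ∀ ε > (0:ℝ), ∃ n, dist y (p n) < ε) :
    Isometry (embIso p) := by
  refine Isometry.of_dist_eq fun y y' => ?_
  rw [dist_eq_norm]
  refine le_antisymm (embIso_norm_sub_le p y y') ?_
  refine le_of_forall_pos_le_add fun ε hε => ?_
  obtain ⟨n, hn⟩ := hdense y' (ε/2) (by linarith)
  have hcoord : |embSeq p y n - embSeq p y' n| ≤ ‖embIso p y - embIso p y'‖ := by
    have := lp.norm_apply_le_norm ENNReal.top_ne_zero (embIso p y - embIso p y') n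
    rwa [embIso_sub_apply, Real.norm_eq_abs] at this
  have hdiff : embSeq p y n - embSeq p y' n = dist y (p n) - dist y' (p n) := by
    simp only [embSeq]; ring
  have htri : dist y y' ≤ dist y (p n) + dist (p n) y' := dist_triangle _ _ _
  have habs : dist y (p n) - dist y' (p n) ≤ |embSeq p y n - embSeq p y' n| := by
    rw [hdiff] at *
    exact le_abs_self _ |>.trans_eq (by rw [hdiff])
  have : dist y y' ≤ |embSeq p y n - embSeq p y' n| + 2 * dist y' (p n) := by
    have h1 : dist (p n) y' = dist y' (p n) := dist_comm _ _
    have h2 : dist y (p n) - dist y' (p n) ≤ |embSeq p y n - embSeq p y' n| := by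
      rw [hdiff]; exact le_abs_self _
    linarith
  linarith [hcoord, hn]

end CompactnessAux

set_option synthInstance.maxHeartbeats 1000000 in
set_option maxHeartbeats 1000000 in
/-- **Compactness lemma.** Any sequence of 1-Lipschitz maps from `[0,1]^d` onto metric
spaces has a subsequence converging (after isometric embedding into `ℓ^∞`) uniformly to
a 1-Lipschitz map onto a compact subset of `ℓ^∞`; in particular `dist(f_{i_k}, f) → 0`. -/
theorem lipschitz_maps_compactness (d : ℕ) (hd : 0 < d)
    (Y : ℕ → Type) [∀ i, MetricSpace (Y i)]
    (f : ∀ i, Eucl d → Y i)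
    (hf : ∀ i, LipschitzOnWith 1 (f i) (unitCube d))
    (honto : ∀ i, ∀ y : Y i, ∃ x ∈ unitCube d, f i x = y) :
    ∃ (K : Set ellInfty) (F : Eucl d → ellInfty),
      IsCompact K ∧ LipschitzOnWith 1 F (unitCube d) ∧ F '' unitCube d = K ∧
      ∃ φ : ℕ → ℕ, StrictMono φ ∧
        ∃ ι : ∀ k : ℕ, Y (φ k) → ellInfty,
          (∀ k, Isometry (ι k)) ∧
          (∀ ε > (0:ℝ), ∃ N : ℕ, ∀ k ≥ N, ∀ x ∈ unitCube d,
            ‖ι k (f (φ k) x) - F x‖ < ε) ∧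
          (∀ ε > (0:ℝ), ∃ N : ℕ, ∀ k ≥ N, approxDist (f (φ k)) F ε) := by
  classical
  -- a countable dense sequence in the unit cube
  set Q := unitCube d with hQdef
  have hQc : IsCompact Q := unitCube_isCompact d
  have hQne : Q.Nonempty := unitCube_nonempty d
  obtain ⟨t, hts, htc, htd⟩ := EMetric.subset_countable_closure_of_compact hQc
  have htne : t.Nonempty := closure_nonempty_iff.mp ⟨hQne.choose, htd hQne.choose_spec⟩
  obtain ⟨x, hxt⟩ := htc.exists_eq_range htne
  have hxQ : ∀ n, x n ∈ Q := fun n => hts (hxt ▸ Set.mem_range_self n)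
  have hdense : ∀ q ∈ Q, ∀ δ > (0:ℝ), ∃ n, dist q (x n) < δ := by
    intro q hq δ hδ
    have : q ∈ closure (Set.range x) := hxt ▸ htd hq
    obtain ⟨b, ⟨n, rfl⟩, hb⟩ := Metric.mem_closure_iff.1 this δ hδ
    exact ⟨n, hb⟩
  -- distance form of the Lipschitz hypothesis
  have hfd : ∀ i, ∀ a ∈ Q, ∀ b ∈ Q, dist (f i a) (f i b) ≤ dist a b := by
    intro i a ha b hb
    have := (lipschitzOnWith_iff_dist_le_mul.1 (hf i)) a ha b hb
    simpa using this
  -- finite nets in the cube made of points of the dense sequence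
  have hsnet : ∀ δ > (0:ℝ), ∃ s : Finset ℕ, ∀ q ∈ Q, ∃ m ∈ s, dist q (x m) < δ := by
    intro δ hδ
    have hcover : Q ⊆ ⋃ n, Metric.ball (x n) δ := by
      intro q hq
      obtain ⟨n, hn⟩ := hdense q hq δ hδ
      exact Set.mem_iUnion.2 ⟨n, Metric.mem_ball.2 hn⟩
    obtain ⟨s, hs⟩ := hQc.elim_finite_subcover (fun n => Metric.ball (x n) δ)
      (fun n => Metric.isOpen_ball) hcover
    refine ⟨s, fun q hq => ?_⟩
    obtain ⟨m, hm, hq'⟩ := Set.mem_iUnion₂.1 (hs hq)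
    exact ⟨m, hm, Metric.mem_ball.1 hq'⟩
  -- diagonal subsequence making all mutual distances converge
  set D := Metric.diam Q with hDdef
  set A : ℕ → (ℕ × ℕ → ℝ) := fun i q => dist (f i (x q.1)) (f i (x q.2)) with hAdef
  have hAmem : ∀ i, A i ∈ Set.pi Set.univ (fun _ : ℕ × ℕ => Set.Icc (0:ℝ) D) := by
    intro i q _
    refine ⟨dist_nonneg, ?_⟩
    exact (hfd i _ (hxQ q.1) _ (hxQ q.2)).trans
      (Metric.dist_le_diam_of_mem hQc.isBounded (hxQ q.1) (hxQ q.2))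
  obtain ⟨a, -, φ, hφ, hconv⟩ :=
    (isCompact_univ_pi fun _ : ℕ × ℕ => isCompact_Icc).tendsto_subseq hAmem
  have hconvp : ∀ q : ℕ × ℕ, Filter.Tendsto (fun k => A (φ k) q) Filter.atTop (nhds (a q)) :=
    fun q => tendsto_pi_nhds.1 hconv q
  -- the embeddings and approximating maps
  set p : ∀ i : ℕ, ℕ → Y i := fun i n => f i (x n) with hpdef
  have hpdense : ∀ i, ∀ y : Y i, ∀ ε > (0:ℝ), ∃ n, dist y (p i n) < ε := by
    intro i y ε hε
    obtain ⟨w, hw, rfl⟩ := honto i y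
    obtain ⟨n, hn⟩ := hdense w hw ε hε
    exact ⟨n, lt_of_le_of_lt (hfd i w hw (x n) (hxQ n)) hn⟩
  have hiso : ∀ i, Isometry (embIso (p i)) := fun i => embIso_isometry (p i) (hpdense i)
  set G : ℕ → Eucl d → ellInfty := fun k z => embIso (p (φ k)) (f (φ k) z) with hGdef
  have hGlip : ∀ k, ∀ z ∈ Q, ∀ w ∈ Q, dist (G k z) (G k w) ≤ dist z w := by
    intro k z hz w hw
    rw [hGdef]
    rw [(hiso (φ k)).dist_eq]
    exact hfd (φ k) z hz w hw
  -- limits of the coordinate functions at points of the dense sequence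
  set c : ℕ → ℕ → ℕ → ℝ := fun k m n => embSeq (p (φ k)) (f (φ k) (x m)) n with hcdef
  set b : ℕ → ℕ → ℝ := fun m n => a (m, n) - a (0, n) with hbdef
  have hb : ∀ m n, Filter.Tendsto (fun k => c k m n) Filter.atTop (nhds (b m n)) := by
    intro m n
    have h1 : (fun k => c k m n) = fun k => A (φ k) (m, n) - A (φ k) (0, n) := rfl
    rw [h1, hbdef]
    exact (hconvp (m, n)).sub (hconvp (0, n))
  -- uniform Cauchy property
  have hcauchy : ∀ ε > (0:ℝ), ∃ N, ∀ k ≥ N, ∀ l ≥ N, ∀ z ∈ Q, ‖G k z - G l z‖ ≤ ε := by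
    intro ε hε
    set δ := ε / 8 with hδdef
    have hδ : 0 < δ := by positivity
    obtain ⟨s, hs⟩ := hsnet δ hδ
    have key : ∀ m n : ℕ, ∀ᶠ k in Filter.atTop, |c k m n - b m n| < δ := by
      intro m n
      obtain ⟨N, hN⟩ := Metric.tendsto_atTop.mp (hb m n) δ hδ
      exact Filter.eventually_atTop.2 ⟨N, fun k hk => by
        simpa [Real.dist_eq] using hN k hk⟩
    have hev : ∀ᶠ k in Filter.atTop, ∀ q ∈ (↑(s ×ˢ s) : Set (ℕ × ℕ)),
        |c k q.1 q.2 - b q.1 q.2| < δ :=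
      (Set.Finite.eventually_all (s ×ˢ s).finite_toSet).2 fun q _ => key q.1 q.2
    obtain ⟨N, hN⟩ := Filter.eventually_atTop.1 hev
    refine ⟨N, fun k hk l hl z hz => ?_⟩
    obtain ⟨m, hms, hmz⟩ := hs z hz
    refine lp.norm_le_of_forall_le hε.le fun n => ?_
    obtain ⟨n', hn's, hnn'⟩ := hs (x n) (hxQ n)
    -- abbreviations for the five relevant real numbers
    set a0 : ℝ := embSeq (p (φ k)) (f (φ k) z) n with ha0
    set a5 : ℝ := embSeq (p (φ l)) (f (φ l) z) n with ha5
    have hsub : (G k z - G l z) n = G k z n - G l z n := by simp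
    have e0 : G k z n = a0 := rfl
    have e5 : G l z n = a5 := rfl
    rw [hsub, e0, e5, Real.norm_eq_abs]
    have t1 : |a0 - c k m n| ≤ δ := by
      refine (embSeq_diff1 (p (φ k)) _ _ n).trans ?_
      exact ((hfd (φ k) z hz (x m) (hxQ m)).trans hmz.le)
    have t6 : |c l m n - a5| ≤ δ := by
      rw [abs_sub_comm]
      refine (embSeq_diff1 (p (φ l)) _ _ n).trans ?_
      exact ((hfd (φ l) z hz (x m) (hxQ m)).trans hmz.le)
    have hpp : ∀ k', dist (p (φ k') n) (p (φ k') n') ≤ δ := fun k' =>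
      (hfd (φ k') (x n) (hxQ n) (x n') (hxQ n')).trans hnn'.le
    have t2 : |c k m n - c k m n'| ≤ 2 * δ := by
      refine (embSeq_diff2 (p (φ k)) _ n n').trans ?_
      have := hpp k
      linarith
    have t5 : |c l m n' - c l m n| ≤ 2 * δ := by
      rw [abs_sub_comm]
      refine (embSeq_diff2 (p (φ l)) _ n n').trans ?_
      have := hpp l
      linarith
    have hmm' : ((m, n') : ℕ × ℕ) ∈ (↑(s ×ˢ s) : Set (ℕ × ℕ)) := by
      simp only [Finset.coe_product, Set.mem_prod]
      exact ⟨hms, hn's⟩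
    have t3 : |c k m n' - b m n'| < δ := hN k hk (m, n') hmm'
    have t4 : |c l m n' - b m n'| < δ := hN l hl (m, n') hmm'
    have u1 : |a0 - a5| ≤ |a0 - c k m n| + |c k m n - a5| := abs_sub_le _ _ _
    have u2 : |c k m n - a5| ≤ |c k m n - c k m n'| + |c k m n' - a5| := abs_sub_le _ _ _
    have u3 : |c k m n' - a5| ≤ |c k m n' - c l m n'| + |c l m n' - a5| := abs_sub_le _ _ _
    have u4 : |c l m n' - a5| ≤ |c l m n' - c l m n| + |c l m n - a5| := abs_sub_le _ _ _
    have u5 : |c k m n' - c l m n'| ≤ |c k m n' - b m n'| + |b m n' - c l m n'| :=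
      abs_sub_le _ _ _
    have u6 : |b m n' - c l m n'| = |c l m n' - b m n'| := abs_sub_comm _ _
    rw [hδdef] at *
    linarith
  -- pointwise Cauchy, hence a limit function
  have hCS : ∀ z ∈ Q, CauchySeq (fun k => G k z) := by
    intro z hz
    refine Metric.cauchySeq_iff.2 fun ε hε => ?_
    obtain ⟨N, hN⟩ := hcauchy (ε/2) (by linarith)
    refine ⟨N, fun k hk l hl => ?_⟩
    have := hN k hk l hl z hz
    rw [dist_eq_norm]
    linarith
  set F : Eucl d → ellInfty := fun z =>
    if h : z ∈ Q then (cauchySeq_tendsto_of_complete (hCS z h)).choose else 0 with hFdef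
  have hFt : ∀ z ∈ Q, Filter.Tendsto (fun k => G k z) Filter.atTop (nhds (F z)) := by
    intro z hz
    rw [hFdef]
    simp only [dif_pos hz]
    exact (cauchySeq_tendsto_of_complete (hCS z hz)).choose_spec
  -- uniform convergence
  have hunif : ∀ ε > (0:ℝ), ∃ N, ∀ k ≥ N, ∀ z ∈ Q, ‖G k z - F z‖ < ε := by
    intro ε hε
    obtain ⟨N, hN⟩ := hcauchy (ε/2) (by linarith)
    refine ⟨N, fun k hk z hz => ?_⟩
    have hlim : Filter.Tendsto (fun l => ‖G k z - G l z‖) Filter.atTop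
        (nhds ‖G k z - F z‖) := (tendsto_const_nhds.sub (hFt z hz)).norm
    have hle : ‖G k z - F z‖ ≤ ε/2 := by
      refine le_of_tendsto hlim ?_
      exact Filter.eventually_atTop.2 ⟨N, fun l hl => hN k hk l hl z hz⟩
    linarith
  -- Lipschitz property of F on Q
  have hFlip : LipschitzOnWith 1 F Q := by
    refine lipschitzOnWith_iff_dist_le_mul.2 fun z hz w hw => ?_
    have hlim : Filter.Tendsto (fun k => dist (G k z) (G k w)) Filter.atTop
        (nhds (dist (F z) (F w))) := (hFt z hz).dist (hFt w hw)
    have := le_of_tendsto hlim (Filter.Eventually.of_forall fun k => hGlip k z hz w hw)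
    simpa using this
  refine ⟨F '' Q, F, hQc.image_of_continuousOn hFlip.continuousOn, hFlip, rfl,
    φ, hφ, fun k => embIso (p (φ k)), fun k => hiso (φ k), ?_, ?_⟩
  · intro ε hε
    obtain ⟨N, hN⟩ := hunif ε hε
    exact ⟨N, fun k hk z hz => hN k hk z hz⟩
  · intro ε hε
    obtain ⟨N, hN⟩ := hunif ε hε
    refine ⟨N, fun k hk => ⟨embIso (p (φ k)), id, hiso (φ k), isometry_id, fun z hz => ?_⟩⟩
    simpa using hN k hk z hz
end
end
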